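/- For f := (1 - X^2)(1 - Y^2) ∈ ℝ⟨X,Y⟩ and any m ∈ ℕ (m ≥ 1), the element f + 1/m is cyclically equivalent to an element of the quadratic module M_ℝ generated by 1 - X^2 and 1 - Y^2 in ℝ⟨X,Y⟩. -/

import Mathlib

abbrev NCPoly (k : Type) [CommSemiring k] (n : ℕ) := MonoidAlgebra k (FreeMonoid (Fin n))

noncomputable def ncWord (k : Type) [CommSemiring k] {n : ℕ} (w : FreeMonoid (Fin n)) : NCPoly k n :=
  MonoidAlgebra.of k (FreeMonoid (Fin n)) w

noncomputable def ncX (k : Type) [CommSemiring k] {n : ℕ} (i : Fin n) : NCPoly k n :=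
  ncWord k (FreeMonoid.of i)

/-- The involution on `k⟨X⟩` fixing the variables and conjugating coefficients. -/
noncomputable def ncStar {k : Type} [CommSemiring k] [StarRing k] {n : ℕ} (f : NCPoly k n) : NCPoly k n :=
  MonoidAlgebra.ofCoeff (Finsupp.mapDomain FreeMonoid.reverse (Finsupp.mapRange star (star_zero k) f.coeff))

/-- `f` and `g` are cyclically equivalent: `f - g` is a sum of commutators. -/
def IsCyclicEquiv {k : Type} [CommRing k] {n : ℕ} (f g : NCPoly k n) : Prop :=
  f - g ∈ AddSubmonoid.closure {x : NCPoly k n | ∃ p q, x = p * q - q * p}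

/-- The quadratic module generated by the `1 - X_i^2`: all finite sums of
elements `g* g` and `g* (1 - X_i^2) g`. -/
noncomputable def QuadMod (k : Type) [CommRing k] [StarRing k] (n : ℕ) : AddSubmonoid (NCPoly k n) :=
  AddSubmonoid.closure
    ({x | ∃ g : NCPoly k n, x = ncStar g * g} ∪
     {x | ∃ (g : NCPoly k n) (i : Fin n), x = ncStar g * (1 - (ncX k i) ^ 2) * g})

/-- Evaluation of a noncommutative polynomial at a tuple of matrices. -/
noncomputable def ncEval {k : Type} [CommRing k] {n s : ℕ}
    (A : Fin n → Matrix (Fin s) (Fin s) k) :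
    NCPoly k n →ₐ[k] Matrix (Fin s) (Fin s) k :=
  MonoidAlgebra.lift k (Matrix (Fin s) (Fin s) k) (FreeMonoid (Fin n)) (FreeMonoid.lift A)

/-- A self-adjoint contraction matrix: `A* = A` and `1 - A²` positive semidefinite. -/
def IsSAContraction {k : Type} [CommRing k] [StarRing k] [PartialOrder k] [StarOrderedRing k]
    {s : ℕ} (A : Matrix (Fin s) (Fin s) k) : Prop :=
  A.IsHermitian ∧ (1 - A * A).PosSemidef

open Finset

section helpers

lemma key {R : Type} [Ring R] (a c : R) (m : ℕ) :
    m • ((1-a)*(1-c)) + 1 =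
      a^m*c + (1-c) + (∑ j ∈ range m, ∑ k ∈ range j, (1-a)*a^k*((1-a)*(1-c)))
        + (∑ k ∈ range m, a^k*(1-a)) := by
  have tel : ∀ n : ℕ, (∑ k ∈ range n, a^k*(1-a)) = 1 - a^n := by
    intro n
    have h := Finset.sum_range_sub' (fun k => a^k) n
    calc (∑ k ∈ range n, a^k*(1-a)) = ∑ k ∈ range n, (a^k - a^(k+1)) := by
          apply Finset.sum_congr rfl; intro k _
          rw [mul_sub, mul_one, ← pow_succ]
      _ = 1 - a^n := by rw [h, pow_zero]
  have inner : ∀ j : ℕ, (∑ k ∈ range j, (1-a)*a^k*((1-a)*(1-c)))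
      = (1 - a^j)*((1-a)*(1-c)) := by
    intro j
    have h := Finset.sum_range_sub' (fun k => a^k * ((1-a)*(1-c))) j
    calc (∑ k ∈ range j, (1-a)*a^k*((1-a)*(1-c)))
        = ∑ k ∈ range j, (a^k*((1-a)*(1-c)) - a^(k+1)*((1-a)*(1-c))) := by
          apply Finset.sum_congr rfl; intro k _
          rw [sub_mul, one_mul, ← sub_mul, ← pow_succ']
      _ = 1*((1-a)*(1-c)) - a^j*((1-a)*(1-c)) := by rw [h, pow_zero]
      _ = (1 - a^j)*((1-a)*(1-c)) := by rw [← sub_mul]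
  have outer : (∑ j ∈ range m, ∑ k ∈ range j, (1-a)*a^k*((1-a)*(1-c)))
      = m • ((1-a)*(1-c)) - (1-a^m)*(1-c) := by
    calc (∑ j ∈ range m, ∑ k ∈ range j, (1-a)*a^k*((1-a)*(1-c)))
        = ∑ j ∈ range m, ((1-a)*(1-c) - a^j*((1-a)*(1-c))) := by
          apply Finset.sum_congr rfl; intro j _
          rw [inner j, sub_mul, one_mul]
      _ = m • ((1-a)*(1-c)) - (∑ j ∈ range m, a^j)*((1-a)*(1-c)) := by
          rw [Finset.sum_sub_distrib, Finset.sum_const, card_range, ← Finset.sum_mul]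
      _ = m • ((1-a)*(1-c)) - (1-a^m)*(1-c) := by
          rw [← mul_assoc]
          congr 2
          calc (∑ j ∈ range m, a^j)*(1-a) = -((∑ j ∈ range m, a^j)*(a-1)) := by
                rw [← mul_neg, neg_sub]
            _ = 1 - a^m := by rw [geom_sum_mul, neg_sub]
  rw [outer, tel]
  have expand : (1-a^m)*(1-c) = 1 - c - a^m + a^m*c := by
    rw [sub_mul, one_mul, mul_sub, mul_one]; abel
  rw [expand]; abel

lemma KEY {R : Type} [Ring R] (x y : R) (m : ℕ) :
    m • ((1-x^2)*(1-y^2)) + 1 =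
      (x^m*(x^m*y^2) - (x^m*y^2)*x^m
        + ∑ j ∈ range m, ∑ k ∈ range j,
            (((1-x^2)*x^k)*(x^k*((1-x^2)*(1-y^2))) - (x^k*((1-x^2)*(1-y^2)))*((1-x^2)*x^k)))
      + ((1-y^2)
        + ∑ j ∈ range m, ∑ k ∈ range j, x^k*(1-x^2)*(1-y^2)*((1-x^2)*x^k)
        + x^m*y*(y*x^m)
        + ∑ k ∈ range m, x^k*(1-x^2)*x^k) := by
  have e1 : ∀ k : ℕ, x^k*x^k = (x^2)^k := fun k => by rw [← pow_add, ← two_mul, pow_mul]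
  have hc : ∀ k : ℕ, x^k * (1-x^2) = (1-x^2) * x^k := by
    intro k
    exact (((Commute.one_right x).sub_right ((Commute.refl x).pow_right 2)).pow_left k).eq
  have hVU : ∀ k : ℕ, x^k*(1-x^2)*(1-y^2)*((1-x^2)*x^k)
      = (x^k*((1-x^2)*(1-y^2)))*((1-x^2)*x^k) := by
    intro k; simp only [mul_assoc]
  have hG : x^m*y*(y*x^m) = (x^m*y^2)*x^m := by
    simp only [pow_two, mul_assoc]
  have hUV : ∀ k : ℕ, ((1-x^2)*x^k)*(x^k*((1-x^2)*(1-y^2)))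
      = (1-x^2)*(x^2)^k*((1-x^2)*(1-y^2)) := by
    intro k
    rw [mul_assoc (1-x^2), ← mul_assoc (x^k), e1, ← mul_assoc]
  have hP : x^m*(x^m*y^2) = (x^2)^m*y^2 := by rw [← mul_assoc, e1]
  have hT : ∀ k : ℕ, x^k*(1-x^2)*x^k = (x^2)^k*(1-x^2) := by
    intro k
    rw [mul_assoc, ← hc, ← mul_assoc, e1]
  calc m • ((1-x^2)*(1-y^2)) + 1
      = (x^2)^m*y^2 + (1-y^2)
        + (∑ j ∈ range m, ∑ k ∈ range j, (1-x^2)*(x^2)^k*((1-x^2)*(1-y^2)))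
        + (∑ k ∈ range m, (x^2)^k*(1-x^2)) := key (x^2) (y^2) m
    _ = _ := by
        simp only [Finset.sum_sub_distrib]
        simp only [hUV, hVU, hG, hP, hT]
        abel

lemma ncStar_single {n : ℕ} (w : FreeMonoid (Fin n)) (c : ℝ) :
    ncStar (MonoidAlgebra.single w c : NCPoly ℝ n) = MonoidAlgebra.single w.reverse c := by
  unfold ncStar
  simp [MonoidAlgebra.coeff_single, Finsupp.mapRange_single, Finsupp.mapDomain_single, MonoidAlgebra.ofCoeff_single]

lemma smul_ncWord {n : ℕ} (c : ℝ) (w : FreeMonoid (Fin n)) :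
    c • ncWord ℝ w = MonoidAlgebra.single w c := by
  unfold ncWord
  rw [MonoidAlgebra.of_apply, MonoidAlgebra.smul_single]
  simp

lemma ncStar_add {n : ℕ} (f g : NCPoly ℝ n) : ncStar (f + g) = ncStar f + ncStar g := by
  unfold ncStar
  rw [MonoidAlgebra.coeff_add, Finsupp.mapRange_add star_add, Finsupp.mapDomain_add, MonoidAlgebra.ofCoeff_add]

lemma ncStar_sub {n : ℕ} (f g : NCPoly ℝ n) : ncStar (f - g) = ncStar f - ncStar g := by
  rw [eq_sub_iff_add_eq, ← ncStar_add, sub_add_cancel]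

lemma reverse_pow {n : ℕ} (i : Fin n) (k : ℕ) :
    FreeMonoid.reverse (FreeMonoid.of i ^ k) = FreeMonoid.of i ^ k := by
  induction k with
  | zero => rfl
  | succ k ih =>
      calc (FreeMonoid.of i ^ (k+1)).reverse
          = (FreeMonoid.of i ^ k * FreeMonoid.of i).reverse := by rw [pow_succ]
        _ = FreeMonoid.of i * FreeMonoid.of i ^ k := by
            rw [FreeMonoid.reverse_mul, ih, FreeMonoid.reverse_of]
        _ = FreeMonoid.of i ^ (k+1) := (pow_succ' _ _).symm

lemma ncX_pow {n : ℕ} (i : Fin n) (k : ℕ) : (ncX ℝ i) ^ k = ncWord ℝ (FreeMonoid.of i ^ k) :=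
  (map_pow (MonoidAlgebra.of ℝ (FreeMonoid (Fin n))) _ k).symm

lemma smul_ncX_pow {n : ℕ} (c : ℝ) (i : Fin n) (k : ℕ) :
    c • (ncX ℝ i) ^ k = MonoidAlgebra.single (FreeMonoid.of i ^ k) c := by
  rw [ncX_pow, smul_ncWord]

lemma ncStarD {n : ℕ} (c : ℝ) (i : Fin n) (k : ℕ) :
    ncStar (c • (ncX ℝ i) ^ k) = c • (ncX ℝ i) ^ k := by
  rw [smul_ncX_pow, ncStar_single, reverse_pow]

lemma ncStarA' {n : ℕ} (c : ℝ) : ncStar (c • (1 : NCPoly ℝ n)) = c • 1 := by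
  have h1 : (1 : NCPoly ℝ n) = ncWord ℝ 1 := (map_one (MonoidAlgebra.of ℝ (FreeMonoid (Fin n)))).symm
  rw [h1, smul_ncWord, ncStar_single]
  rfl

lemma ncStarB (c : ℝ) (k : ℕ) :
    ncStar (c • ((1 - ncX ℝ (0:Fin 2) ^ 2) * ncX ℝ 0 ^ k))
      = c • (ncX ℝ (0:Fin 2) ^ k * (1 - ncX ℝ 0 ^ 2)) := by
  have h1 : (1 - ncX ℝ (0:Fin 2) ^ 2) * ncX ℝ 0 ^ k
      = ncX ℝ (0:Fin 2) ^ k - ncX ℝ 0 ^ (k+2) := by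
    rw [sub_mul, one_mul, ← pow_add, Nat.add_comm]
  have h2 : ncX ℝ (0:Fin 2) ^ k * (1 - ncX ℝ 0 ^ 2)
      = ncX ℝ (0:Fin 2) ^ k - ncX ℝ 0 ^ (k+2) := by
    rw [mul_sub, mul_one, ← pow_add]
  rw [h1, h2, smul_sub, ncStar_sub, ncStarD, ncStarD]

lemma ncStarC (c : ℝ) (m : ℕ) :
    ncStar (c • (ncX ℝ (1:Fin 2) * ncX ℝ 0 ^ m)) = c • (ncX ℝ (0:Fin 2) ^ m * ncX ℝ 1) := by
  have h1 : ncX ℝ (1:Fin 2) * ncX ℝ 0 ^ m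
      = ncWord ℝ (FreeMonoid.of 1 * FreeMonoid.of (0:Fin 2) ^ m) := by
    rw [ncX_pow]
    exact (map_mul (MonoidAlgebra.of ℝ (FreeMonoid (Fin 2))) _ _).symm
  have h2 : ncX ℝ (0:Fin 2) ^ m * ncX ℝ 1
      = ncWord ℝ (FreeMonoid.of (0:Fin 2) ^ m * FreeMonoid.of 1) := by
    rw [ncX_pow]
    exact (map_mul (MonoidAlgebra.of ℝ (FreeMonoid (Fin 2))) _ _).symm
  rw [h1, h2, smul_ncWord, smul_ncWord, ncStar_single, FreeMonoid.reverse_mul,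
    reverse_pow, FreeMonoid.reverse_of]

/-- The element of the quadratic module. -/
noncomputable def HH (m : ℕ) : NCPoly ℝ 2 :=
  ncStar (Real.sqrt (m:ℝ)⁻¹ • (1:NCPoly ℝ 2)) * (1 - ncX ℝ 1 ^ 2)
      * (Real.sqrt (m:ℝ)⁻¹ • (1:NCPoly ℝ 2))
  + ∑ j ∈ range m, ∑ k ∈ range j,
      ncStar (Real.sqrt (m:ℝ)⁻¹ • ((1 - ncX ℝ 0 ^ 2) * ncX ℝ 0 ^ k)) * (1 - ncX ℝ 1 ^ 2)
        * (Real.sqrt (m:ℝ)⁻¹ • ((1 - ncX ℝ 0 ^ 2) * ncX ℝ 0 ^ k))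
  + ncStar (Real.sqrt (m:ℝ)⁻¹ • (ncX ℝ 1 * ncX ℝ 0 ^ m))
      * (Real.sqrt (m:ℝ)⁻¹ • (ncX ℝ 1 * ncX ℝ 0 ^ m))
  + ∑ k ∈ range m,
      ncStar (Real.sqrt (m:ℝ)⁻¹ • (ncX ℝ 0 ^ k)) * (1 - ncX ℝ 0 ^ 2)
        * (Real.sqrt (m:ℝ)⁻¹ • (ncX ℝ 0 ^ k))

/-- The sum of commutators. -/
noncomputable def CC (m : ℕ) : NCPoly ℝ 2 :=
  (m:ℝ)⁻¹ • (ncX ℝ (0:Fin 2) ^ m * (ncX ℝ 0 ^ m * ncX ℝ 1 ^ 2)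
      - (ncX ℝ 0 ^ m * ncX ℝ 1 ^ 2) * ncX ℝ 0 ^ m)
  + ∑ j ∈ range m, ∑ k ∈ range j,
      (m:ℝ)⁻¹ • (((1 - ncX ℝ (0:Fin 2) ^ 2) * ncX ℝ 0 ^ k)
          * (ncX ℝ 0 ^ k * ((1 - ncX ℝ 0 ^ 2) * (1 - ncX ℝ 1 ^ 2)))
        - (ncX ℝ 0 ^ k * ((1 - ncX ℝ 0 ^ 2) * (1 - ncX ℝ 1 ^ 2)))
          * ((1 - ncX ℝ 0 ^ 2) * ncX ℝ 0 ^ k))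

lemma HH_mem (m : ℕ) : HH m ∈ QuadMod ℝ 2 := by
  unfold HH QuadMod
  refine AddSubmonoid.add_mem _ (AddSubmonoid.add_mem _ (AddSubmonoid.add_mem _ ?_ ?_) ?_) ?_
  · exact AddSubmonoid.subset_closure (Or.inr ⟨_, 1, rfl⟩)
  · exact AddSubmonoid.sum_mem _ (fun j _ => AddSubmonoid.sum_mem _ (fun k _ =>
      AddSubmonoid.subset_closure (Or.inr ⟨_, 1, rfl⟩)))
  · exact AddSubmonoid.subset_closure (Or.inl ⟨_, rfl⟩)
  · exact AddSubmonoid.sum_mem _ (fun k _ =>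
      AddSubmonoid.subset_closure (Or.inr ⟨_, 0, rfl⟩))

lemma CC_mem (m : ℕ) :
    CC m ∈ AddSubmonoid.closure {x : NCPoly ℝ 2 | ∃ p q, x = p * q - q * p} := by
  unfold CC
  refine AddSubmonoid.add_mem _ ?_ (AddSubmonoid.sum_mem _ fun j _ =>
    AddSubmonoid.sum_mem _ fun k _ => ?_)
  · refine AddSubmonoid.subset_closure ⟨(m:ℝ)⁻¹ • (ncX ℝ (0:Fin 2) ^ m),
      ncX ℝ 0 ^ m * ncX ℝ 1 ^ 2, ?_⟩
    rw [smul_sub, smul_mul_assoc, mul_smul_comm]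
  · refine AddSubmonoid.subset_closure ⟨(m:ℝ)⁻¹ • ((1 - ncX ℝ (0:Fin 2) ^ 2) * ncX ℝ 0 ^ k),
      ncX ℝ 0 ^ k * ((1 - ncX ℝ 0 ^ 2) * (1 - ncX ℝ 1 ^ 2)), ?_⟩
    rw [smul_sub, smul_mul_assoc, mul_smul_comm]

lemma main_eq (m : ℕ) (hm : 1 ≤ m) :
    (1 - (ncX ℝ 0 : NCPoly ℝ 2) ^ 2) * (1 - ncX ℝ 1 ^ 2) + (m : ℝ)⁻¹ • 1 - HH m = CC m := by
  have hm0 : (m:ℝ) ≠ 0 := Nat.cast_ne_zero.mpr (by omega)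
  have hcc : Real.sqrt (m:ℝ)⁻¹ * Real.sqrt (m:ℝ)⁻¹ = (m:ℝ)⁻¹ :=
    Real.mul_self_sqrt (inv_nonneg.mpr (Nat.cast_nonneg m))
  rw [sub_eq_iff_eq_add]
  have base : (m:ℝ)⁻¹ • ((m • ((1 - (ncX ℝ 0 : NCPoly ℝ 2) ^ 2) * (1 - ncX ℝ 1 ^ 2))) + 1)
      = (1 - (ncX ℝ 0 : NCPoly ℝ 2) ^ 2) * (1 - ncX ℝ 1 ^ 2) + (m : ℝ)⁻¹ • 1 := by
    rw [smul_add, ← Nat.cast_smul_eq_nsmul ℝ, smul_smul, inv_mul_cancel₀ hm0, one_smul]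
  rw [← base, KEY (ncX ℝ (0:Fin 2)) (ncX ℝ 1) m]
  unfold HH CC
  simp only [ncStarA', ncStarB, ncStarC, ncStarD, smul_mul_assoc, mul_smul_comm, smul_smul,
    hcc, one_mul, mul_one, smul_add, smul_sub, Finset.smul_sum]

theorem stmt16 (m : ℕ) (hm : 1 ≤ m) :
    ∃ h ∈ QuadMod ℝ 2,
      IsCyclicEquiv
        ((1 - (ncX ℝ 0 : NCPoly ℝ 2) ^ 2) * (1 - ncX ℝ 1 ^ 2) + (m : ℝ)⁻¹ • 1) h := by
  refine ⟨HH m, HH_mem m, ?_⟩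
  unfold IsCyclicEquiv
  rw [main_eq m hm]
  exact CC_mem m
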